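/- Let {L_a}_{a∈A} be a finite family of affine subspaces of W, set X = ⋃_{a∈A} L_a, and let X_reg = {x ∈ X | there exist an open neighborhood U of x and an affine subspace L of W with X ∩ U = L ∩ U} be the regular locus of X. Let S ⊆ X be a closed subset such that S ∩ X_reg is open in X_reg and S is the closure of S ∩ X_reg. Then S is PL. -/

import Mathlib

open Set

/-- An (open or closed) affine half-space in a real vector space. -/
def IsHalfspace {V : Type*} [AddCommGroup V] [Module ℝ V] (H : Set V) : Prop :=
  ∃ (f : V →ₗ[ℝ] ℝ) (c : ℝ), H = {x | f x < c} ∨ H = {x | f x ≤ c}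

/-- A convex polyhedron: the intersection of finitely many open or closed affine
half-spaces (the empty intersection being the whole space). -/
def IsConvexPolyhedron {V : Type*} [AddCommGroup V] [Module ℝ V] (P : Set V) : Prop :=
  ∃ (n : ℕ) (H : Fin n → Set V), (∀ i, IsHalfspace (H i)) ∧ P = ⋂ i, H i

/-- A PL (piecewise linear) set: a finite union of convex polyhedra. -/
def IsPL {V : Type*} [AddCommGroup V] [Module ℝ V] (S : Set V) : Prop :=
  ∃ (n : ℕ) (P : Fin n → Set V), (∀ i, IsConvexPolyhedron (P i)) ∧ S = ⋃ i, P i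


/-- The regular locus of a union `X` of affine subspaces: points near which `X`
coincides with a single affine subspace. -/
def regLocus {W : Type*} [NormedAddCommGroup W] [NormedSpace ℝ W] (X : Set W) : Set W :=
  {x ∈ X | ∃ (U : Set W) (L : AffineSubspace ℝ W),
    IsOpen U ∧ x ∈ U ∧ X ∩ U = (L : Set W) ∩ U}

section Auxiliary

set_option linter.unusedSectionVars false
set_option maxHeartbeats 2000000

open Module

variable {W : Type*} [NormedAddCommGroup W] [NormedSpace ℝ W] [FiniteDimensional ℝ W]

/-- A nonempty relatively open subset of an affine subspace is not covered by finitely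
many affine subspaces not containing the affine subspace. -/
lemma exists_avoid {L : AffineSubspace ℝ W} {G : Set W} (hG : IsOpen G) {x₀ : W}
    (hx₀L : x₀ ∈ L) (hx₀G : x₀ ∈ G) {ι : Type*} [Finite ι]
    (A : ι → AffineSubspace ℝ W) (hA : ∀ j, ¬ (L ≤ A j)) :
    ∃ x ∈ (L : Set W) ∩ G, ∀ j, x ∉ A j := by
  classical
  by_cases hJ : ∀ j, x₀ ∉ A j
  · exact ⟨x₀, ⟨hx₀L, hx₀G⟩, hJ⟩
  push_neg at hJ
  -- find a direction v in L.direction avoiding all directions of A j with x₀ ∈ A j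
  have hproper : ∀ j : {j // x₀ ∈ A j}, ¬ (L.direction ≤ (A j.1).direction) := by
    rintro ⟨j, hj⟩ hle
    refine hA j (fun p hp => ?_)
    have : p -ᵥ x₀ ∈ (A j).direction := hle (AffineSubspace.vsub_mem_direction hp hx₀L)
    simpa using AffineSubspace.vadd_mem_of_mem_direction this hj
  obtain ⟨v, hv⟩ : ∃ v : L.direction, ∀ j : {j // x₀ ∈ A j},
      (v : W) ∉ (A j.1).direction := by
    by_contra hc
    push_neg at hc
    have hcov : ⋃ j : {j // x₀ ∈ A j},
        ((((A j.1).direction.comap L.direction.subtype) : Submodule ℝ L.direction) : Set L.direction)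
          = Set.univ := by
      ext w
      simp only [Set.mem_iUnion, Set.mem_univ, iff_true]
      obtain ⟨j, hj⟩ := hc w
      exact ⟨j, hj⟩
    obtain ⟨j, hj⟩ := Subspace.exists_eq_top_of_iUnion_eq_univ hcov
    refine hproper j (fun w hw => ?_)
    have : (⟨w, hw⟩ : L.direction) ∈ (A j.1).direction.comap L.direction.subtype := by
      rw [hj]; trivial
    simpa using this
  have hvne : (v : W) ≠ 0 := by
    intro h0
    obtain ⟨j, hj⟩ := hJ
    exact hv ⟨j, hj⟩ (h0 ▸ (A j).direction.zero_mem)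
  -- each A j meets the line t ↦ x₀ + t • v in at most one point
  obtain ⟨ε, hε, hball⟩ := Metric.isOpen_iff.1 hG x₀ hx₀G
  set bad : Set ℝ := ⋃ j, {t : ℝ | x₀ + t • (v : W) ∈ A j} with hbad
  have hbadfin : bad.Finite := by
    refine Set.finite_iUnion (fun j => ?_)
    rcases Set.eq_empty_or_nonempty {t : ℝ | x₀ + t • (v : W) ∈ A j} with h | ⟨t₀, ht₀⟩
    · simp [h]
    · apply Set.Finite.subset (Set.finite_singleton t₀)
      intro t ht
      by_contra htne
      simp only [Set.mem_singleton_iff] at htne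
      have hdir : (v : W) ∈ (A j).direction := by
        have := AffineSubspace.vsub_mem_direction ht ht₀
        have h2 : (x₀ + t • (v:W)) -ᵥ (x₀ + t₀ • (v:W)) = (t - t₀) • (v : W) := by
          simp [vsub_eq_sub]; module
        rw [h2] at this
        have := (A j).direction.smul_mem (t - t₀)⁻¹ this
        rwa [smul_smul, inv_mul_cancel₀ (sub_ne_zero.2 htne), one_smul] at this
      have hx₀j : x₀ ∈ A j := by
        have := AffineSubspace.vadd_mem_of_mem_direction ((A j).direction.smul_mem (-t₀) hdir) ht₀
        have h3 : -(t₀ • (v:W)) +ᵥ (x₀ + t₀ • (v:W)) = x₀ := by rw [vadd_eq_add]; abel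
        rwa [neg_smul, h3] at this
      exact hv ⟨j, hx₀j⟩ hdir
  set δ := ε / (‖(v : W)‖ + 1) with hδ
  have hδpos : 0 < δ := div_pos hε (by positivity)
  obtain ⟨t, htI, htbad⟩ : ∃ t ∈ Set.Ioo (0:ℝ) δ, t ∉ bad := by
    have : (Set.Ioo (0:ℝ) δ \ bad).Nonempty :=
      Set.Infinite.nonempty ((Set.Ioo_infinite hδpos).diff hbadfin)
    obtain ⟨t, ht⟩ := this
    exact ⟨t, ht.1, ht.2⟩
  refine ⟨x₀ + t • (v : W), ⟨?_, ?_⟩, ?_⟩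
  · have heq : x₀ + t • (v:W) = t • (v:W) +ᵥ x₀ := by rw [vadd_eq_add, add_comm]
    rw [SetLike.mem_coe, heq]
    exact AffineSubspace.vadd_mem_of_mem_direction (L.direction.smul_mem t v.2) hx₀L
  · apply hball
    simp only [Metric.mem_ball, dist_eq_norm]
    have : ‖x₀ + t • (v:W) - x₀‖ = t * ‖(v:W)‖ := by
      simp [norm_smul, abs_of_pos htI.1]
    rw [this]
    calc t * ‖(v:W)‖ ≤ t * (‖(v:W)‖ + 1) := by nlinarith [htI.1]
    _ < δ * (‖(v:W)‖ + 1) := by nlinarith [htI.2, norm_nonneg (v:W), htI.1]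
    _ = ε := by rw [hδ, div_mul_cancel₀ _ (by positivity : ‖(v:W)‖ + 1 ≠ 0)]
  · intro j hj
    exact htbad (Set.mem_iUnion.2 ⟨j, hj⟩)

lemma isConvexPolyhedron_iInter {ι : Type*} [Fintype ι] (H : ι → Set W)
    (hH : ∀ i, IsHalfspace (H i)) : IsConvexPolyhedron (⋂ i, H i) := by
  classical
  obtain ⟨e⟩ : Nonempty (ι ≃ Fin (Fintype.card ι)) := ⟨Fintype.equivFin ι⟩
  refine ⟨Fintype.card ι, H ∘ e.symm, fun i => hH _, ?_⟩
  ext x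
  simp only [Set.mem_iInter, Function.comp_apply]
  exact ⟨fun h i => h _, fun h i => by simpa using h (e i)⟩

lemma isPL_iUnion {ι : Type*} [Fintype ι] (f : ι → Set W)
    (h : ∀ i, IsPL (f i)) : IsPL (⋃ i, f i) := by
  classical
  choose m P hP hfP using h
  let σ := Σ i : ι, Fin (m i)
  obtain ⟨e⟩ : Nonempty (σ ≃ Fin (Fintype.card σ)) := ⟨Fintype.equivFin σ⟩
  refine ⟨Fintype.card σ, (fun p : σ => P p.1 p.2) ∘ e.symm, fun i => hP _ _, ?_⟩
  ext x
  simp only [Set.mem_iUnion, Function.comp_apply, hfP]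
  constructor
  · rintro ⟨i, j, hj⟩
    refine ⟨e ⟨i, j⟩, ?_⟩
    rw [Equiv.symm_apply_apply]
    exact hj
  · rintro ⟨k, hk⟩; exact ⟨(e.symm k).1, (e.symm k).2, hk⟩

lemma isPL_empty : IsPL (∅ : Set W) := ⟨0, Fin.elim0, fun i => i.elim0, by simp⟩

lemma isHalfspace_le (f : W →ₗ[ℝ] ℝ) (c : ℝ) : IsHalfspace {x | f x ≤ c} := ⟨f, c, Or.inr rfl⟩

lemma isHalfspace_ge (f : W →ₗ[ℝ] ℝ) (c : ℝ) : IsHalfspace {x | c ≤ f x} := by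
  refine ⟨-f, -c, Or.inr ?_⟩
  ext x
  simp only [Set.mem_setOf_eq, LinearMap.neg_apply, neg_le_neg_iff]

/-- Closure of a convex "polyhedron with strict inequalities" containing a point. -/
lemma closure_eqs_strict {ι₁ ι₂ : Type*} [Fintype ι₁] [Fintype ι₂]
    (f : ι₁ → W →ₗ[ℝ] ℝ) (c : ι₁ → ℝ) (g : ι₂ → W →ₗ[ℝ] ℝ) (e : ι₂ → ℝ)
    (hne : {x | (∀ i, f i x = c i) ∧ ∀ j, g j x < e j}.Nonempty) :
    closure {x | (∀ i, f i x = c i) ∧ ∀ j, g j x < e j}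
      = {x | (∀ i, f i x = c i) ∧ ∀ j, g j x ≤ e j} := by
  obtain ⟨x₀, hx₀f, hx₀g⟩ := hne
  apply subset_antisymm
  · apply closure_minimal
    · intro x hx; exact ⟨hx.1, fun j => (hx.2 j).le⟩
    · have h1 : IsClosed (⋂ i, {x : W | f i x = c i}) :=
        isClosed_iInter (fun i => isClosed_eq (f i).continuous_of_finiteDimensional continuous_const)
      have h2 : IsClosed (⋂ j, {x : W | g j x ≤ e j}) :=
        isClosed_iInter (fun j => isClosed_le (g j).continuous_of_finiteDimensional continuous_const)
      have : {x : W | (∀ i, f i x = c i) ∧ ∀ j, g j x ≤ e j}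
          = (⋂ i, {x : W | f i x = c i}) ∩ ⋂ j, {x : W | g j x ≤ e j} := by
        ext x; simp [Set.mem_iInter]
      rw [this]; exact h1.inter h2
  · rintro q ⟨hqf, hqg⟩
    have htend : Filter.Tendsto (fun N : ℕ => q + (1 / (N + 1) : ℝ) • (x₀ - q))
        Filter.atTop (nhds q) := by
      have h0 : Filter.Tendsto (fun N : ℕ => (1 / (N + 1) : ℝ)) Filter.atTop (nhds 0) :=
        tendsto_one_div_add_atTop_nhds_zero_nat
      have := (h0.smul_const (x₀ - q)).const_add q
      simpa using this
    refine mem_closure_of_tendsto htend (Filter.Eventually.of_forall (fun N => ?_))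
    have hθpos : (0:ℝ) < 1 / (N + 1) := by positivity
    have hθle : (1 / (N + 1) : ℝ) ≤ 1 := by
      rw [div_le_one (by positivity)]; norm_num
    constructor
    · intro i
      simp only [map_add, map_smul, map_sub, hx₀f i, hqf i, smul_eq_mul]
      ring
    · intro j
      have h1 := hx₀g j
      have h2 := hqg j
      simp only [Set.mem_setOf_eq, map_add, map_smul, map_sub, smul_eq_mul]
      nlinarith

/-- A nonempty affine subspace is the common zero set of finitely many affine equations. -/
lemma affine_eqs (La : AffineSubspace ℝ W) {x₀ : W} (hx₀ : x₀ ∈ La) :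
    ∃ (k : ℕ) (f : Fin k → W →ₗ[ℝ] ℝ) (c : Fin k → ℝ),
      (La : Set W) = {x | ∀ i, f i x = c i} := by
  classical
  set V := La.direction
  set Q := W ⧸ V
  set B : Basis (Fin (finrank ℝ (Dual ℝ Q))) ℝ (Dual ℝ Q) := finBasis ℝ (Dual ℝ Q)
  refine ⟨finrank ℝ (Dual ℝ Q), fun i => (B i).comp V.mkQ, fun i => (B i) (V.mkQ x₀), ?_⟩
  ext x
  simp only [Set.mem_setOf_eq, LinearMap.comp_apply]
  constructor
  · intro hx i
    have : x -ᵥ x₀ ∈ V := AffineSubspace.vsub_mem_direction hx hx₀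
    have h0 : V.mkQ (x - x₀) = 0 := by rwa [Submodule.mkQ_apply, Submodule.Quotient.mk_eq_zero]
    have : V.mkQ x - V.mkQ x₀ = 0 := by rw [← map_sub]; exact h0
    rw [sub_eq_zero] at this
    rw [this]
  · intro hx
    have hz : V.mkQ (x - x₀) = 0 := by
      have hall : ∀ φ : Dual ℝ Q, φ (V.mkQ (x - x₀)) = 0 := by
        have hev : (Dual.eval ℝ Q (V.mkQ (x - x₀))) = 0 := by
          apply B.ext
          intro i
          have hsub : (B i) (V.mkQ (x - x₀)) = (B i) (V.mkQ x) - (B i) (V.mkQ x₀) := by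
            rw [map_sub, map_sub]
          simp only [Dual.eval_apply, LinearMap.zero_apply, hsub, hx i, sub_self]
        intro φ
        have := congrArg (fun ψ : Dual ℝ (Dual ℝ Q) => ψ φ) hev
        simpa using this
      exact (forall_dual_apply_eq_zero_iff ℝ _).1 hall
    rw [Submodule.mkQ_apply, Submodule.Quotient.mk_eq_zero] at hz
    have : x - x₀ ∈ V := hz
    have := AffineSubspace.vadd_mem_of_mem_direction this hx₀
    simpa [vadd_eq_add, sub_add_cancel] using this

/-- For a codimension-one intersection, a linear functional cutting it out of `La`. -/
lemma wall_functional {La Lb : AffineSubspace ℝ W} {x₀ : W} (hx₀ : x₀ ∈ Lb ⊓ La)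
    (hcodim : finrank ℝ (Lb ⊓ La).direction + 1 = finrank ℝ La.direction) :
    ∃ (f : W →ₗ[ℝ] ℝ) (c : ℝ),
      ((Lb ⊓ La : AffineSubspace ℝ W) : Set W) = (La : Set W) ∩ {x | f x = c} := by
  classical
  set D := (Lb ⊓ La).direction with hD
  set Va := La.direction with hVa
  have hDle : D ≤ Va := AffineSubspace.direction_le inf_le_right
  have hlt : D < Va := lt_of_le_of_ne hDle (by
    intro h; rw [h] at hcodim; omega)
  obtain ⟨u, huVa, huD⟩ := SetLike.exists_of_lt hlt
  obtain ⟨f, hfu, hfD⟩ := Submodule.exists_dual_map_eq_bot_of_notMem huD inferInstance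
  have hfD' : ∀ w ∈ D, f w = 0 := by
    intro w hw
    have : f w ∈ D.map f := Submodule.mem_map_of_mem hw
    rw [hfD] at this
    simpa using this
  refine ⟨f, f x₀, ?_⟩
  have hx₀b : x₀ ∈ Lb := hx₀.1
  have hx₀a : x₀ ∈ La := hx₀.2
  -- D = Va ⊓ ker f
  have hker : D = Va ⊓ LinearMap.ker f := by
    have hle : D ≤ Va ⊓ LinearMap.ker f := by
      intro w hw
      exact ⟨hDle hw, by simpa [LinearMap.mem_ker] using hfD' w hw⟩
    have hne : Va ⊓ LinearMap.ker f ≠ Va := by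
      intro h
      have : u ∈ Va ⊓ LinearMap.ker f := h.symm ▸ huVa
      exact hfu this.2
    have hlt2 : Va ⊓ LinearMap.ker f < Va := lt_of_le_of_ne inf_le_left hne
    have hfr : finrank ℝ (Va ⊓ LinearMap.ker f : Submodule ℝ W) < finrank ℝ Va :=
      Submodule.finrank_lt_finrank_of_lt hlt2
    exact Submodule.eq_of_le_of_finrank_le hle (by omega)
  ext y
  simp only [Set.mem_inter_iff, Set.mem_setOf_eq, SetLike.mem_coe,
    AffineSubspace.mem_inf_iff]
  constructor
  · rintro ⟨hyb, hya⟩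
    have hyD : y - x₀ ∈ D := by
      have := AffineSubspace.vsub_mem_direction (AffineSubspace.mem_inf_iff _ _ _ |>.2 ⟨hyb, hya⟩) hx₀
      simpa [vsub_eq_sub] using this
    refine ⟨hya, ?_⟩
    have := hfD' _ hyD
    rw [map_sub] at this
    linarith
  · rintro ⟨hya, hyf⟩
    have h1 : y - x₀ ∈ Va := by
      have := AffineSubspace.vsub_mem_direction hya hx₀a
      simpa [vsub_eq_sub] using this
    have h2 : y - x₀ ∈ LinearMap.ker f := by
      rw [LinearMap.mem_ker, map_sub]; linarith
    have hyD : y - x₀ ∈ D := by rw [hker]; exact ⟨h1, h2⟩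
    have hyDb : y - x₀ ∈ Lb.direction := AffineSubspace.direction_le inf_le_left hyD
    have := AffineSubspace.vadd_mem_of_mem_direction hyDb hx₀b
    constructor
    · simpa [vadd_eq_add, sub_add_cancel] using this
    · exact hya

end Auxiliary

open Module in
set_option maxHeartbeats 2000000 in
theorem closed_union_of_reg_is_PL {W : Type*} [NormedAddCommGroup W] [NormedSpace ℝ W]
    [FiniteDimensional ℝ W] (n : ℕ) (L : Fin n → AffineSubspace ℝ W)
    (X : Set W) (hX : X = ⋃ a, (L a : Set W)) (S : Set W)
    (hSX : S ⊆ X) (hSclosed : IsClosed S)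
    (hopen : ∃ U : Set W, IsOpen U ∧ S ∩ regLocus X = U ∩ regLocus X)
    (hdense : S = closure (S ∩ regLocus X)) :
    IsPL S := by
  classical
  obtain ⟨U, hUopen, hU⟩ := hopen
  set M : Fin n → Set W := fun a =>
    (L a : Set W) \ ⋃ b, ⋃ (_ : ¬ L b ≤ L a), (L b : Set W) with hM
  -- Step 1 : M a ⊆ regLocus X
  have hMreg : ∀ a, M a ⊆ regLocus X := by
    intro a x hx
    obtain ⟨hxa, hxn⟩ := hx
    have hXa : (L a : Set W) ⊆ X := by rw [hX]; exact subset_iUnion (fun a => ((L a : Set W))) a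
    refine ⟨hXa hxa, (⋃ b, ⋃ (_ : ¬ L b ≤ L a), (L b : Set W))ᶜ, L a, ?_, hxn, ?_⟩
    · rw [isOpen_compl_iff]
      exact isClosed_iUnion_of_finite fun b =>
        isClosed_iUnion_of_finite fun _ => (L b).closed_of_finiteDimensional
    · ext y
      constructor
      · rintro ⟨hyX, hyC⟩
        rw [hX] at hyX
        obtain ⟨b, hyb⟩ := mem_iUnion.1 hyX
        by_cases hb : L b ≤ L a
        · exact ⟨hb hyb, hyC⟩
        · exact absurd (mem_iUnion.2 ⟨b, mem_iUnion.2 ⟨hb, hyb⟩⟩) hyC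
      · rintro ⟨hya, hyC⟩
        exact ⟨hXa hya, hyC⟩
  -- Step 2 : regLocus X ⊆ ⋃ a, M a
  have hregM : regLocus X ⊆ ⋃ a, M a := by
    intro x hx
    obtain ⟨hxX, U', Lx, hU'open, hxU', hXU'⟩ := hx
    have hxLx : x ∈ Lx := by
      have : x ∈ X ∩ U' := ⟨hxX, hxU'⟩
      rw [hXU'] at this
      exact this.1
    have halpha : ∀ b, x ∈ L b → L b ≤ Lx := by
      intro b hxb
      have hdir : (L b).direction ≤ Lx.direction := by
        intro v hv
        have hpre : IsOpen ((fun t : ℝ => x + t • v) ⁻¹' U') :=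
          hU'open.preimage (continuous_const.add (continuous_id.smul continuous_const))
        have h0 : (0:ℝ) ∈ (fun t : ℝ => x + t • v) ⁻¹' U' := by
          simp [hxU']
        obtain ⟨ε, hε, hball⟩ := Metric.isOpen_iff.1 hpre 0 h0
        set t := ε/2 with ht
        have htpos : 0 < t := by positivity
        have htU' : x + t • v ∈ U' := by
          apply hball
          simp only [Metric.mem_ball, dist_zero_right, Real.norm_eq_abs, abs_of_pos htpos]
          linarith
        have hxtb : x + t • v ∈ L b := by
          have heq : x + t • v = t • v +ᵥ x := by rw [vadd_eq_add, add_comm]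
          rw [heq]
          exact AffineSubspace.vadd_mem_of_mem_direction ((L b).direction.smul_mem t hv) hxb
        have hmem : x + t • v ∈ Lx := by
          have : x + t • v ∈ X ∩ U' := by
            refine ⟨?_, htU'⟩
            rw [hX]
            exact mem_iUnion.2 ⟨b, hxtb⟩
          rw [hXU'] at this
          exact this.1
        have htv : t • v ∈ Lx.direction := by
          have := AffineSubspace.vsub_mem_direction hmem hxLx
          simpa [vsub_eq_sub] using this
        have := Lx.direction.smul_mem t⁻¹ htv
        rwa [smul_smul, inv_mul_cancel₀ htpos.ne', one_smul] at this
      intro p hp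
      have : p -ᵥ x ∈ Lx.direction := hdir (AffineSubspace.vsub_mem_direction hp hxb)
      simpa using AffineSubspace.vadd_mem_of_mem_direction this hxLx
    have hbeta : ∃ a, Lx ≤ L a := by
      by_contra hc
      push_neg at hc
      obtain ⟨y, ⟨hyLx, hyU'⟩, hyn⟩ := exists_avoid hU'open hxLx hxU' L hc
      have : y ∈ X ∩ U' := by rw [hXU']; exact ⟨hyLx, hyU'⟩
      rw [hX] at this
      obtain ⟨b, hyb⟩ := mem_iUnion.1 this.1
      exact hyn b hyb
    obtain ⟨a, ha⟩ := hbeta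
    refine mem_iUnion.2 ⟨a, ha hxLx, ?_⟩
    simp only [mem_iUnion, not_exists]
    intro b hb hxb
    exact hb (le_trans (halpha b hxb) ha)
  -- Step 3 : S = union of closures
  have hSreg : S ∩ regLocus X = ⋃ a, S ∩ M a := by
    rw [← inter_iUnion]
    apply subset_antisymm
    · exact fun p hp => ⟨hp.1, hregM hp.2⟩
    · rintro p ⟨hpS, hpM⟩
      obtain ⟨a, hpa⟩ := mem_iUnion.1 hpM
      exact ⟨hpS, hMreg a hpa⟩
  have hS : S = ⋃ a, closure (S ∩ M a) := by
    apply subset_antisymm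
    · conv_lhs => rw [hdense, hSreg]
      exact closure_minimal (iUnion_mono fun a => subset_closure)
        (isClosed_iUnion_of_finite fun a => isClosed_closure)
    · refine iUnion_subset fun a => ?_
      have := closure_mono (inter_subset_left : S ∩ M a ⊆ S)
      rwa [hSclosed.closure_eq] at this
  rw [hS]
  apply isPL_iUnion
  intro a

  -- ================= Step 4 : each closure (S ∩ M a) is PL =================
  by_cases hne : (S ∩ M a).Nonempty
  swap
  · rw [not_nonempty_iff_eq_empty] at hne
    rw [hne, closure_empty]
    exact isPL_empty
  obtain ⟨xb, hxbS, hxbM⟩ := hne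
  have hxba : xb ∈ L a := hxbM.1
  have hB : ∀ b, ¬ L b ≤ L a → ¬ L a ≤ L b := by
    intro b hb hab
    exact hxbM.2 (mem_iUnion.2 ⟨b, mem_iUnion.2 ⟨hb, hab hxba⟩⟩)
  set Wall : Fin n → Prop := fun b => ¬ L b ≤ L a ∧
      ((L b ⊓ L a : AffineSubspace ℝ W) : Set W).Nonempty ∧
      finrank ℝ (L b ⊓ L a).direction + 1 = finrank ℝ (L a).direction with hWallDef
  set Small : Fin n → Prop := fun b => ¬ L b ≤ L a ∧
      ((L b ⊓ L a : AffineSubspace ℝ W) : Set W).Nonempty ∧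
      finrank ℝ (L b ⊓ L a).direction + 1 < finrank ℝ (L a).direction with hSmallDef
  have htri : ∀ b, ¬ L b ≤ L a → ((L b ⊓ L a : AffineSubspace ℝ W) : Set W).Nonempty →
      Wall b ∨ Small b := by
    intro b hb hne'
    have hlt : (L b ⊓ L a) < L a := by
      refine lt_of_le_of_ne inf_le_right ?_
      intro h
      exact hB b hb (by rw [← h]; exact inf_le_left)
    have hdlt := AffineSubspace.direction_lt_of_nonempty hlt hne'
    have hfr := Submodule.finrank_lt_finrank_of_lt hdlt
    rcases Nat.lt_or_ge (finrank ℝ (L b ⊓ L a).direction + 1) (finrank ℝ (L a).direction) with h | h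
    · exact Or.inr ⟨hb, hne', h⟩
    · exact Or.inl ⟨hb, hne', by omega⟩
  have hwallf : ∀ b, Wall b → ∃ (f : W →ₗ[ℝ] ℝ) (c : ℝ),
      ((L b ⊓ L a : AffineSubspace ℝ W) : Set W) = (L a : Set W) ∩ {x | f x = c} := by
    intro b hb
    obtain ⟨p, hp⟩ := hb.2.1
    exact wall_functional hp hb.2.2
  choose! fw cw hfw using hwallf
  set Ω : (Fin n → Bool) → Set W := fun σ =>
    ⋂ b, ⋂ (_ : Wall b), (if σ b then {x | fw b x < cw b} else {x | cw b < fw b x}) with hΩDef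
  set Cham : (Fin n → Bool) → Set W := fun σ => (L a : Set W) ∩ Ω σ with hChamDef
  set SmallU : Set W :=
    ⋃ b, ⋃ (_ : Small b), ((L b ⊓ L a : AffineSubspace ℝ W) : Set W) with hSmallUDef
  set Pc : (Fin n → Bool) → Set W := fun σ => Cham σ \ SmallU with hPcDef
  have hΩopen : ∀ σ, IsOpen (Ω σ) := by
    intro σ
    refine isOpen_iInter_of_finite fun b => isOpen_iInter_of_finite fun hb => ?_
    by_cases h : σ b <;> simp only [h, if_true, if_false]
    · exact isOpen_lt (fw b).continuous_of_finiteDimensional continuous_const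
    · exact isOpen_lt continuous_const (fw b).continuous_of_finiteDimensional
  have hmemΩ : ∀ σ x, x ∈ Ω σ ↔
      ∀ b, Wall b → (if σ b then fw b x < cw b else cw b < fw b x) := by
    intro σ x
    rw [hΩDef]
    simp only [mem_iInter]
    constructor
    · intro h b hb
      have := h b hb
      by_cases hσ : σ b <;> simpa [hσ] using this
    · intro h b hb
      have := h b hb
      by_cases hσ : σ b <;> simpa [hσ] using this
  have hPM : ∀ σ, Pc σ ⊆ M a := by
    rintro σ x ⟨⟨hxa, hxΩ⟩, hxs⟩
    refine ⟨hxa, ?_⟩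
    simp only [mem_iUnion, not_exists]
    intro b hb hxb
    have hxin : x ∈ ((L b ⊓ L a : AffineSubspace ℝ W) : Set W) :=
      (AffineSubspace.mem_inf_iff x (L b) (L a)).2 ⟨hxb, hxa⟩
    rcases htri b hb ⟨x, hxin⟩ with hw | hs
    · have heq := hfw b hw
      have hxeq : x ∈ (L a : Set W) ∩ {y | fw b y = cw b} := by rw [← heq]; exact hxin
      have hiff := (hmemΩ σ x).1 hxΩ b hw
      have hfx : fw b x = cw b := hxeq.2
      by_cases hσ : σ b
      · rw [if_pos hσ] at hiff
        exact absurd hfx (ne_of_lt hiff)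
      · rw [if_neg hσ] at hiff
        exact absurd hfx (ne_of_gt hiff)
    · exact hxs (mem_iUnion.2 ⟨b, mem_iUnion.2 ⟨hs, hxin⟩⟩)
  have hMP : M a ⊆ ⋃ σ, Pc σ := by
    rintro x ⟨hxa, hxn⟩
    have hxnb : ∀ b, ¬ L b ≤ L a → x ∉ L b := by
      intro b hb hxb
      exact hxn (mem_iUnion.2 ⟨b, mem_iUnion.2 ⟨hb, hxb⟩⟩)
    refine mem_iUnion.2 ⟨fun b => decide (fw b x < cw b), ⟨⟨hxa, ?_⟩, ?_⟩⟩
    · rw [hmemΩ]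
      intro b hb
      have hfneq : fw b x ≠ cw b := by
        intro heq
        have hxin : x ∈ (L a : Set W) ∩ {y | fw b y = cw b} := ⟨hxa, heq⟩
        rw [← hfw b hb] at hxin
        exact hxnb b hb.1 ((AffineSubspace.mem_inf_iff x (L b) (L a)).1 hxin).1
      by_cases hlt : fw b x < cw b
      · simp [hlt]
      · have hgt : cw b < fw b x := lt_of_le_of_ne (not_lt.1 hlt) (Ne.symm hfneq)
        simp [hlt, hgt]
    · rw [hSmallUDef]
      simp only [mem_iUnion, not_exists]
      intro b hs hxin
      exact hxnb b hs.1 ((AffineSubspace.mem_inf_iff x (L b) (L a)).1 hxin).1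
  have hSP : ∀ σ, S ∩ Pc σ = U ∩ Pc σ := by
    intro σ
    ext p
    constructor
    · rintro ⟨hpS, hpP⟩
      have hpreg : p ∈ regLocus X := hMreg a (hPM σ hpP)
      have hpu : p ∈ U ∩ regLocus X := by rw [← hU]; exact ⟨hpS, hpreg⟩
      exact ⟨hpu.1, hpP⟩
    · rintro ⟨hpU, hpP⟩
      have hpreg : p ∈ regLocus X := hMreg a (hPM σ hpP)
      have hps : p ∈ S ∩ regLocus X := by rw [hU]; exact ⟨hpU, hpreg⟩
      exact ⟨hps.1, hpP⟩
  have hsmallpt : ∀ b, Small b →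
      ∃ p, p ∈ ((L b ⊓ L a : AffineSubspace ℝ W) : Set W) := fun b hb => hb.2.1
  choose! pt hpt using hsmallpt
  have hChamconvex : ∀ σ, Convex ℝ (Cham σ) := by
    intro σ
    rw [hChamDef]
    apply Convex.inter ((L a).convex)
    refine convex_iInter fun b => convex_iInter fun hb => ?_
    by_cases h : σ b <;> simp only [h, if_true, if_false]
    · exact convex_halfSpace_lt (LinearMap.isLinear _) _
    · exact convex_halfSpace_gt (LinearMap.isLinear _) _
  have hjoinseg : ∀ σ (w : W), w ∈ Pc σ → ∀ z ∈ Cham σ,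
      (∀ b, Small b →
        z ∉ AffineSubspace.mk' (pt b) ((L b ⊓ L a).direction ⊔ ℝ ∙ (w - pt b))) →
      JoinedIn (Pc σ) w z := by
    intro σ w hw z hzC hztr
    apply JoinedIn.ofLine (f := fun t : ℝ => w + t • (z - w)) ?_ (by simp) (by simp) ?_
    · exact (continuous_const.add (continuous_id.smul continuous_const)).continuousOn
    · rintro p ⟨t, htI, rfl⟩
      obtain ⟨ht0, ht1⟩ := htI
      show w + t • (z - w) ∈ Pc σ
      by_cases htz : t = 0
      · simpa [htz] using hw
      have htpos : 0 < t := lt_of_le_of_ne ht0 (Ne.symm htz)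
      constructor
      · have heq : w + t • (z - w) = (1 - t) • w + t • z := by module
        rw [heq]
        exact hChamconvex σ hw.1 hzC (by linarith) ht0 (by ring)
      · intro hpin
        rw [hSmallUDef] at hpin
        simp only [mem_iUnion] at hpin
        obtain ⟨b, hs, hpK⟩ := hpin
        apply hztr b hs
        rw [AffineSubspace.mem_mk']
        have h1 : (w + t • (z - w)) -ᵥ pt b ∈ (L b ⊓ L a).direction :=
          AffineSubspace.vsub_mem_direction hpK (hpt b hs)
        have hexp : z -ᵥ pt b =
            t⁻¹ • ((w + t • (z - w)) - pt b) + (1 - t⁻¹) • (w - pt b) := by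
          rw [vsub_eq_sub]
          match_scalars <;> field_simp <;> ring
        rw [hexp]
        refine Submodule.add_mem_sup (Submodule.smul_mem _ _ ?_)
          (Submodule.smul_mem _ _ (Submodule.mem_span_singleton_self _))
        simpa [vsub_eq_sub] using h1
  have hclopen : ∀ σ, (S ∩ Pc σ).Nonempty → Pc σ ⊆ S := by
    intro σ hne' p hpP
    obtain ⟨z₀, hz₀S, hz₀P⟩ := hne'
    have hpath : IsPathConnected (Pc σ) := by
      refine ⟨z₀, hz₀P, fun {q} hq => ?_⟩
      set Bad : {b // Small b} × Bool → AffineSubspace ℝ W := fun j =>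
        AffineSubspace.mk' (pt j.1.1)
          ((L j.1.1 ⊓ L a).direction ⊔ ℝ ∙ ((if j.2 then z₀ else q) - pt j.1.1)) with hBadDef
      have hbadproper : ∀ j, ¬ L a ≤ Bad j := by
        rintro ⟨⟨b, hb⟩, s⟩ hle
        have h1 : (L a).direction ≤ (Bad (⟨b, hb⟩, s)).direction :=
          AffineSubspace.direction_le hle
        rw [hBadDef, AffineSubspace.direction_mk'] at h1
        set wv := (if s then z₀ else q) - pt b with hwv
        have hspan : finrank ℝ (ℝ ∙ wv : Submodule ℝ W) ≤ 1 := by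
          rcases eq_or_ne wv 0 with h | h
          · rw [h, Submodule.span_zero_singleton]
            simp
          · rw [finrank_span_singleton h]
        have hsupeq := Submodule.finrank_sup_add_finrank_inf_eq
          ((L b ⊓ L a).direction) (ℝ ∙ wv)
        have hVa : finrank ℝ (L a).direction ≤
            finrank ℝ ((L b ⊓ L a).direction ⊔ ℝ ∙ wv : Submodule ℝ W) :=
          Submodule.finrank_mono h1
        have hsm := hb.2.2
        omega
      obtain ⟨hz₀C, hz₀n⟩ := hz₀P
      obtain ⟨hz₀La, hz₀Ω⟩ := hz₀C
      obtain ⟨z, ⟨hzLa, hzΩ⟩, hzbad⟩ := exists_avoid (hΩopen σ) hz₀La hz₀Ω Bad hbadproper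
      have h1 : JoinedIn (Pc σ) z₀ z :=
        hjoinseg σ z₀ ⟨⟨hz₀La, hz₀Ω⟩, hz₀n⟩ z ⟨hzLa, hzΩ⟩
          (fun b hb => by simpa [hBadDef] using hzbad ⟨⟨b, hb⟩, true⟩)
      have h2 : JoinedIn (Pc σ) q z :=
        hjoinseg σ q hq z ⟨hzLa, hzΩ⟩
          (fun b hb => by simpa [hBadDef] using hzbad ⟨⟨b, hb⟩, false⟩)
      exact h1.trans h2.symm
    have hpre := hpath.isConnected.isPreconnected
    by_contra hpS
    have h2 : (Pc σ ∩ Sᶜ).Nonempty := ⟨p, hpP, hpS⟩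
    have h1 : (Pc σ ∩ U).Nonempty := by
      refine ⟨z₀, hz₀P, ?_⟩
      have : z₀ ∈ U ∩ Pc σ := by rw [← hSP σ]; exact ⟨hz₀S, hz₀P⟩
      exact this.1
    have hsub : Pc σ ⊆ U ∪ Sᶜ := by
      intro q hq
      by_cases hqS : q ∈ S
      · left
        have : q ∈ U ∩ Pc σ := by rw [← hSP σ]; exact ⟨hqS, hq⟩
        exact this.1
      · right; exact hqS
    obtain ⟨q, hqP, hqU, hqS⟩ := hpre U Sᶜ hUopen hSclosed.isOpen_compl hsub h1 h2
    have : q ∈ S ∩ Pc σ := by rw [hSP σ]; exact ⟨hqU, hqP⟩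
    exact hqS this.1
  have hclos : ∀ σ, closure (Pc σ) = closure (Cham σ) := by
    intro σ
    apply subset_antisymm (closure_mono diff_subset)
    have hdsub : Cham σ ⊆ closure (Pc σ) := by
      intro q hq
      rw [mem_closure_iff]
      intro G hGopen hqG
      obtain ⟨z, ⟨hzLa, hzGΩ⟩, hzn⟩ := exists_avoid (hGopen.inter (hΩopen σ)) hq.1 ⟨hqG, hq.2⟩
        (fun b : {b // Small b} => L b.1 ⊓ L a)
        (by
          rintro ⟨b, hb⟩ hle
          exact hB b hb.1 (le_trans hle inf_le_left))
      refine ⟨z, hzGΩ.1, ⟨⟨hzLa, hzGΩ.2⟩, ?_⟩⟩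
      rw [hSmallUDef]
      simp only [mem_iUnion, not_exists]
      intro b hs hzin
      exact hzn ⟨b, hs⟩ hzin
    calc closure (Cham σ) ⊆ closure (closure (Pc σ)) := closure_mono hdsub
    _ = closure (Pc σ) := closure_closure
  have hsplit : S ∩ M a = ⋃ σ, S ∩ Pc σ := by
    rw [← inter_iUnion]
    apply subset_antisymm
    · exact fun p hp => ⟨hp.1, hMP hp.2⟩
    · rintro p ⟨hpS, hpP⟩
      obtain ⟨σ, hσ⟩ := mem_iUnion.1 hpP
      exact ⟨hpS, hPM σ hσ⟩
  have hfinal : closure (S ∩ M a) = ⋃ σ : Fin n → Bool, closure (S ∩ Pc σ) := by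
    rw [hsplit]
    apply subset_antisymm
    · exact closure_minimal (iUnion_mono fun σ => subset_closure)
        (isClosed_iUnion_of_finite fun σ => isClosed_closure)
    · exact iUnion_subset fun σ => closure_mono (subset_iUnion (fun σ => S ∩ Pc σ) σ)
  rw [hfinal]
  apply isPL_iUnion
  intro σ
  by_cases hne' : (S ∩ Pc σ).Nonempty
  swap
  · rw [not_nonempty_iff_eq_empty] at hne'
    rw [hne', closure_empty]
    exact isPL_empty
  have hPS : Pc σ ⊆ S := hclopen σ hne'
  have hSPeq : S ∩ Pc σ = Pc σ := inter_eq_right.2 hPS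
  rw [hSPeq, hclos σ]
  obtain ⟨k, fe, ce, hLa⟩ := affine_eqs (L a) hxba
  set g : {b // Wall b} → W →ₗ[ℝ] ℝ := fun b => if σ b.1 then fw b.1 else -fw b.1 with hgDef
  set ec : {b // Wall b} → ℝ := fun b => if σ b.1 then cw b.1 else -cw b.1 with hecDef
  have hChameq : Cham σ = {x | (∀ i, fe i x = ce i) ∧ ∀ j : {b // Wall b}, g j x < ec j} := by
    ext x
    rw [hChamDef]
    simp only [mem_inter_iff, mem_setOf_eq]
    rw [hLa]
    simp only [mem_setOf_eq]
    constructor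
    · rintro ⟨hx1, hx2⟩
      refine ⟨hx1, ?_⟩
      rintro ⟨b, hb⟩
      have hiff := (hmemΩ σ x).1 hx2 b hb
      by_cases hσ : σ b
      · rw [if_pos hσ] at hiff
        simp only [hgDef, hecDef]
        rw [if_pos hσ, if_pos hσ]
        exact hiff
      · rw [if_neg hσ] at hiff
        simp only [hgDef, hecDef]
        rw [if_neg hσ, if_neg hσ]
        simp only [LinearMap.neg_apply]
        linarith
    · rintro ⟨hx1, hx2⟩
      refine ⟨hx1, (hmemΩ σ x).2 ?_⟩
      intro b hb
      have hj := hx2 ⟨b, hb⟩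
      simp only [hgDef, hecDef] at hj
      by_cases hσ : σ b
      · rw [if_pos hσ, if_pos hσ] at hj
        rw [if_pos hσ]
        exact hj
      · rw [if_neg hσ, if_neg hσ] at hj
        rw [if_neg hσ]
        simp only [LinearMap.neg_apply] at hj
        linarith
  have hChamne : {x | (∀ i, fe i x = ce i) ∧ ∀ j : {b // Wall b}, g j x < ec j}.Nonempty := by
    rw [← hChameq]
    obtain ⟨p0, hp0⟩ := hne'
    exact ⟨p0, hp0.2.1⟩
  rw [hChameq, closure_eqs_strict fe ce g ec hChamne]
  set H : (Fin k ⊕ Fin k ⊕ {b // Wall b}) → Set W :=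
    Sum.elim (fun i => {x | fe i x ≤ ce i})
      (Sum.elim (fun i => {x | (-(fe i)) x ≤ -(ce i)}) (fun j => {x | g j x ≤ ec j})) with hHDef
  have hHeq : {x | (∀ i, fe i x = ce i) ∧ ∀ j : {b // Wall b}, g j x ≤ ec j} = ⋂ i, H i := by
    ext x
    rw [hHDef]
    simp only [mem_iInter, Sum.forall, Sum.elim_inl, Sum.elim_inr, mem_setOf_eq,
      LinearMap.neg_apply, neg_le_neg_iff]
    constructor
    · rintro ⟨h1, h2⟩
      exact ⟨fun i => (h1 i).le, fun i => (h1 i).ge, h2⟩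
    · rintro ⟨h1, h2, h3⟩
      exact ⟨fun i => le_antisymm (h1 i) (h2 i), h3⟩
  have hpoly : IsConvexPolyhedron (⋂ i, H i) := by
    apply isConvexPolyhedron_iInter
    rintro (i | i | j)
    · exact isHalfspace_le _ _
    · exact isHalfspace_le _ _
    · exact isHalfspace_le _ _
  rw [hHeq]
  exact ⟨1, fun _ => ⋂ i, H i, fun _ => hpoly, (Set.iUnion_const _).symm⟩
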